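/- Let k be a field and define polynomials P_n ∈ k[t] by P_0 = 1, P_1 = t, P_{n+1} = t P_n − P_{n−1} for n ≥ 1. Then for every n ≥ 1, in the polynomial ring k[t,x,y] one has x y^{n−1} P_{n−1} ∈ (x^n, y^n, x^2 + t x y + y^2). -/
import Mathlib


open MvPolynomial

lemma stmt5_key {k : Type*} [Field k] (P : ℕ → Polynomial k)
    (hP0 : P 0 = 1) (hP1 : P 1 = Polynomial.X)
    (hPrec : ∀ n : ℕ, 1 ≤ n → P (n + 1) = Polynomial.X * P n - P (n - 1)) :
    ∀ n : ℕ, ∃ C : MvPolynomial (Fin 3) k,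
      (X 1 : MvPolynomial (Fin 3) k) ^ (n + 2) =
        (-1 : MvPolynomial (Fin 3) k) ^ (n + 1) *
          ((X 2) ^ (n + 1) * Polynomial.aeval (X 0) (P (n + 1)) * X 1
            + (X 2) ^ (n + 2) * Polynomial.aeval (X 0) (P n))
        + ((X 1) ^ 2 + X 0 * X 1 * X 2 + (X 2) ^ 2) * C := by
  intro n
  induction n with
  | zero =>
    refine ⟨1, ?_⟩
    simp only [hP0, hP1, map_one, Polynomial.aeval_X]
    ring
  | succ m ih =>
    obtain ⟨C, hC⟩ := ih
    refine ⟨X 1 * C + (-1) ^ (m + 1) * (X 2) ^ (m + 1) *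
        Polynomial.aeval (X 0) (P (m + 1)), ?_⟩
    have hrec : Polynomial.aeval (X 0 : MvPolynomial (Fin 3) k) (P (m + 2)) =
        X 0 * Polynomial.aeval (X 0) (P (m + 1)) - Polynomial.aeval (X 0) (P m) := by
      rw [hPrec (m + 1) (by omega)]
      simp
    have hx : (X 1 : MvPolynomial (Fin 3) k) ^ (m + 3) = X 1 * (X 1) ^ (m + 2) := by ring
    rw [hx, hC, hrec]
    ring

/-- With `P_0 = 1`, `P_1 = t`, `P_{n+1} = t P_n - P_{n-1}` in `k[t]`,
for every `n ≥ 1` one has `x y^{n-1} P_{n-1} ∈ (x^n, y^n, x^2 + t x y + y^2)` in `k[t,x,y]`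
(here `t = X 0`, `x = X 1`, `y = X 2`). -/
theorem stmt5 {k : Type*} [Field k] (P : ℕ → Polynomial k)
    (hP0 : P 0 = 1) (hP1 : P 1 = Polynomial.X)
    (hPrec : ∀ n : ℕ, 1 ≤ n → P (n + 1) = Polynomial.X * P n - P (n - 1)) :
    ∀ n : ℕ, 1 ≤ n →
      (X 1 : MvPolynomial (Fin 3) k) * (X 2) ^ (n - 1) *
          Polynomial.aeval (X 0 : MvPolynomial (Fin 3) k) (P (n - 1)) ∈
        Ideal.span {(X 1 : MvPolynomial (Fin 3) k) ^ n, (X 2) ^ n,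
          (X 1) ^ 2 + (X 0) * (X 1) * (X 2) + (X 2) ^ 2} := by
  intro n hn
  match n, hn with
  | 1, _ =>
    simp only [Nat.sub_self, pow_zero, mul_one, hP0, map_one, pow_one]
    exact Ideal.subset_span (by simp)
  | (m + 2), _ =>
    obtain ⟨C, hC⟩ := stmt5_key P hP0 hP1 hPrec m
    set I := Ideal.span {(X 1 : MvPolynomial (Fin 3) k) ^ (m + 2), (X 2) ^ (m + 2),
        (X 1) ^ 2 + (X 0) * (X 1) * (X 2) + (X 2) ^ 2} with hI
    have h1 : (X 1 : MvPolynomial (Fin 3) k) ^ (m + 2) ∈ I := Ideal.subset_span (by simp)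
    have h2 : (X 2 : MvPolynomial (Fin 3) k) ^ (m + 2) ∈ I := Ideal.subset_span (by simp)
    have h3 : ((X 1 : MvPolynomial (Fin 3) k)) ^ 2 + X 0 * X 1 * X 2 + (X 2) ^ 2 ∈ I :=
      Ideal.subset_span (by simp)
    have hε : ((-1 : MvPolynomial (Fin 3) k) ^ (m + 1)) * ((-1) ^ (m + 1)) = 1 := by
      rw [← pow_add, ← two_mul, pow_mul]
      norm_num
    have heq : (X 1 : MvPolynomial (Fin 3) k) * (X 2) ^ (m + 2 - 1) *
        Polynomial.aeval (X 0 : MvPolynomial (Fin 3) k) (P (m + 2 - 1)) =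
        (-1) ^ (m + 1) * (X 1) ^ (m + 2) +
          (-(Polynomial.aeval (X 0 : MvPolynomial (Fin 3) k) (P m))) * (X 2) ^ (m + 2) +
          (-((-1) ^ (m + 1) * C)) * ((X 1) ^ 2 + X 0 * X 1 * X 2 + (X 2) ^ 2) := by
      show (X 1 : MvPolynomial (Fin 3) k) * (X 2) ^ (m + 1) *
        Polynomial.aeval (X 0 : MvPolynomial (Fin 3) k) (P (m + 1)) = _
      linear_combination (-((-1 : MvPolynomial (Fin 3) k) ^ (m + 1))) * hC -
        ((X 2 : MvPolynomial (Fin 3) k) ^ (m + 1) *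
            Polynomial.aeval (X 0 : MvPolynomial (Fin 3) k) (P (m + 1)) * X 1
          + (X 2) ^ (m + 2) * Polynomial.aeval (X 0) (P m)) * hε
    rw [heq]
    exact I.add_mem (I.add_mem (I.mul_mem_left _ h1) (I.mul_mem_left _ h2))
      (I.mul_mem_left _ h3)
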